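/- Let K ≥ 1, set 𝒦 = {−K,…,K} and m = 2K+1. Let {(x_i,v_i)}_{i=1}^m be a configuration of m distinct particles in Ω admitting m pairwise distinct ghost particles {(g_j,w_j)}_{j=1}^m with respect to 𝒦, with the set of ghost particles disjoint from the set of particles. Suppose that for every k ∈ 𝒦 the positions x_i + kτv_i (i = 1,…,m) are pairwise distinct, and for every k ∈ 𝒦 and every i ∈ {1,…,m} there exists exactly one index j ∈ {1,…,m} with g_j − x_i + kτ(w_j − v_i) = 0. Let w_1,…,w_m > 0 and ω = Σ_{i=1}^m w_i δ_{(x_i,v_i)}. Then the dynamical recovery problem with data y = 𝒢ω admits infinitely many solutions: there exist infinitely many pairwise distinct finite positive measures λ on Ω with 𝒢λ = 𝒢ω and ‖λ‖_TV = ‖ω‖_TV; in particular, ω is not the unique minimizer of the total variation norm subject to 𝒢λ = y. -/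

import Mathlib

open MeasureTheory Complex Real Set

noncomputable section

/-- Phase space: positions and velocities in `ℝ^d`. -/
abbrev PS (d : ℕ) := (Fin d → ℝ) × (Fin d → ℝ)

/-- The phase-space domain `Ω`. -/
def Omega (d K : ℕ) (τ : ℝ) : Set (PS d) :=
  {p | ∀ k : ℤ, |k| ≤ (K : ℤ) → ∀ j, p.1 j + (k : ℝ) * τ * p.2 j ∈ Set.Icc (0 : ℝ) 1}

/-- The affine set `L_{i,k}` attached to a particle `p₀` and a time sample `k`. -/
def Lset (d K : ℕ) (τ : ℝ) (p₀ : PS d) (k : ℤ) : Set (PS d) :=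
  {p ∈ Omega d K τ | ∀ j, (p.1 j - p₀.1 j) + (k : ℝ) * τ * (p.2 j - p₀.2 j) = 0}

/-- `g` is a ghost particle of the configuration `P` with respect to the
set of time samples `Ks`. -/
def IsGhost {d K N : ℕ} (τ : ℝ) (P : Fin N → PS d) (Ks : Finset ℤ) (g : PS d) : Prop :=
  g ∈ Omega d K τ ∧ ∃ ι : ℤ → Fin N, Set.InjOn ι (Ks : Set ℤ) ∧
    (⋂ k ∈ Ks, Lset d K τ (P (ι k)) k) = {g}

/-- Integral of a complex function against a complex measure, via the Jordan
decompositions of the real and imaginary parts. -/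
def cintegral {α : Type*} [MeasurableSpace α] (μ : ComplexMeasure α) (f : α → ℂ) : ℂ :=
  ((∫ x, f x ∂(ComplexMeasure.re μ).toJordanDecomposition.posPart)
      - ∫ x, f x ∂(ComplexMeasure.re μ).toJordanDecomposition.negPart)
    + Complex.I * ((∫ x, f x ∂(ComplexMeasure.im μ).toJordanDecomposition.posPart)
      - ∫ x, f x ∂(ComplexMeasure.im μ).toJordanDecomposition.negPart)

/-- The total variation norm of a complex measure, defined by duality against
continuous functions bounded by one. -/
def tvNorm {α : Type*} [MeasurableSpace α] [TopologicalSpace α] (μ : ComplexMeasure α) : ℝ :=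
  sSup {r | ∃ f : α → ℂ, Continuous f ∧ (∀ x, ‖f x‖ ≤ 1) ∧ r = ‖cintegral μ f‖}

/-- A complex measure is supported on a set `S` if it vanishes on measurable sets
disjoint from `S`. -/
def SupportedOn {α : Type*} [MeasurableSpace α] (μ : ComplexMeasure α) (S : Set α) : Prop :=
  ∀ t : Set α, MeasurableSet t → Disjoint t S → μ t = 0

/-- The Dirac measure at a point, as a complex measure. -/
def cdirac {α : Type*} [MeasurableSpace α] (a : α) : ComplexMeasure α :=
  (MeasureTheory.Measure.dirac a).toSignedMeasure.toComplexMeasure 0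

/-- The test function `p ↦ e^{-2πi l·(x + kτv)}`. -/
def testFn (d : ℕ) (τ : ℝ) (l : Fin d → ℤ) (k : ℤ) : PS d → ℂ :=
  fun p => Complex.exp (-(2 * (π : ℂ) * Complex.I) *
    ∑ j, (l j : ℂ) * ((p.1 j : ℂ) + (k : ℂ) * (τ : ℂ) * (p.2 j : ℂ)))

/-- The measurement `(𝒢 μ)_{l,k}`. -/
def Gmeas {d : ℕ} (τ : ℝ) (μ : ComplexMeasure (PS d)) (l : Fin d → ℤ) (k : ℤ) : ℂ :=
  cintegral μ (testFn d τ l k)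

/-- Two complex measures give the same measurements for all allowed frequencies
`‖l‖_∞ ≤ f_c` and time samples `|k| ≤ K`. -/
def SameMeas {d : ℕ} (K : ℕ) (τ : ℝ) (f_c : ℕ) (μ ν : ComplexMeasure (PS d)) : Prop :=
  ∀ l : Fin d → ℤ, (∀ j, |l j| ≤ (f_c : ℤ)) → ∀ k : ℤ, |k| ≤ (K : ℤ) →
    Gmeas τ μ l k = Gmeas τ ν l k

/-- The set of allowed frequencies `l ∈ ℤ^d`, `‖l‖_∞ ≤ f_c`. -/
def freqSet (d : ℕ) (f_c : ℕ) : Finset (Fin d → ℤ) :=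
  Fintype.piFinset fun _ => Finset.Icc (-(f_c : ℤ)) (f_c : ℤ)

/-- A function on phase space has dynamical form. -/
def DynamicalForm (d K : ℕ) (τ : ℝ) (f_c : ℕ) (q : PS d → ℂ) : Prop :=
  ∃ c : ℤ → (Fin d → ℤ) → ℂ, ∀ p : PS d,
    q p = ∑ k ∈ Finset.Icc (-(K : ℤ)) (K : ℤ), ∑ l ∈ freqSet d f_c,
      c k l * Complex.exp ((2 * (π : ℂ) * Complex.I) *
        ∑ j, (l j : ℂ) * ((p.1 j : ℂ) + (k : ℂ) * (τ : ℂ) * (p.2 j : ℂ)))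

/-- The canonical embedding of `𝕂` (either `ℝ` or `ℂ`) into `ℂ`. -/
def toC {𝕜 : Type*} [RCLike 𝕜] (a : 𝕜) : ℂ :=
  (RCLike.re a : ℝ) + (RCLike.im a : ℝ) * Complex.I


section Helpers

variable {α : Type*} [MeasurableSpace α]


variable {α : Type*} [MeasurableSpace α]

lemma CM_jordan (μ : Measure α) [IsFiniteMeasure μ] :
    μ.toSignedMeasure.toJordanDecomposition =
      ⟨μ, 0, MeasureTheory.Measure.MutuallySingular.zero_right⟩ := by
  apply MeasureTheory.JordanDecomposition.toSignedMeasure_injective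
  rw [MeasureTheory.SignedMeasure.toSignedMeasure_toJordanDecomposition]
  show μ.toSignedMeasure = μ.toSignedMeasure - (0 : Measure α).toSignedMeasure
  simp

lemma cintegral_CM_aux (μ : Measure α) [IsFiniteMeasure μ] (f : α → ℂ) :
    ((∫ x, f x ∂(μ.toSignedMeasure.toComplexMeasure 0).re.toJordanDecomposition.posPart)
      - ∫ x, f x ∂(μ.toSignedMeasure.toComplexMeasure 0).re.toJordanDecomposition.negPart)
    + Complex.I * ((∫ x, f x ∂(μ.toSignedMeasure.toComplexMeasure 0).im.toJordanDecomposition.posPart)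
      - ∫ x, f x ∂(μ.toSignedMeasure.toComplexMeasure 0).im.toJordanDecomposition.negPart)
    = ∫ x, f x ∂μ := by
  rw [MeasureTheory.SignedMeasure.re_toComplexMeasure,
    MeasureTheory.SignedMeasure.im_toComplexMeasure, CM_jordan,
    MeasureTheory.SignedMeasure.toJordanDecomposition_zero]
  show (∫ x, f x ∂μ - ∫ x, f x ∂(0 : Measure α)) + Complex.I *
    ((∫ x, f x ∂(0 : Measure α)) - ∫ x, f x ∂(0 : Measure α)) = ∫ x, f x ∂μ
  simp

lemma CM_apply (μ : Measure α) [IsFiniteMeasure μ] {s : Set α} (hs : MeasurableSet s) :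
    μ.toSignedMeasure.toComplexMeasure 0 s = ((μ s).toReal : ℂ) := by
  rw [MeasureTheory.SignedMeasure.toComplexMeasure_apply]
  apply Complex.ext
  · simp [MeasureTheory.Measure.toSignedMeasure_apply_measurable hs, hs]; rfl
  · simp

lemma cintegral_CM (μ : Measure α) [IsFiniteMeasure μ] (f : α → ℂ) :
    cintegral (μ.toSignedMeasure.toComplexMeasure 0) f = ∫ x, f x ∂μ :=
  cintegral_CM_aux μ f

lemma tvNorm_CM [TopologicalSpace α] (μ : Measure α) [IsFiniteMeasure μ] :
    tvNorm (μ.toSignedMeasure.toComplexMeasure 0) = (μ Set.univ).toReal := by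
  have hub : ∀ r ∈ {r | ∃ f : α → ℂ, Continuous f ∧ (∀ x, ‖f x‖ ≤ 1) ∧
      r = ‖cintegral (μ.toSignedMeasure.toComplexMeasure 0) f‖}, r ≤ (μ Set.univ).toReal := by
    rintro r ⟨f, _, hb, rfl⟩
    rw [cintegral_CM]
    calc ‖∫ x, f x ∂μ‖ ≤ ∫ x, ‖f x‖ ∂μ := norm_integral_le_integral_norm f
      _ ≤ ∫ _, (1:ℝ) ∂μ := integral_mono_of_nonneg (Filter.Eventually.of_forall fun x => norm_nonneg _)
          (integrable_const 1) (Filter.Eventually.of_forall hb)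
      _ = (μ Set.univ).toReal := by simp; rfl
  have hmem : (μ Set.univ).toReal ∈ {r | ∃ f : α → ℂ, Continuous f ∧ (∀ x, ‖f x‖ ≤ 1) ∧
      r = ‖cintegral (μ.toSignedMeasure.toComplexMeasure 0) f‖} := by
    refine ⟨fun _ => 1, continuous_const, fun x => by simp, ?_⟩
    rw [cintegral_CM]
    rw [MeasureTheory.integral_const]
    simp [norm_smul, _root_.abs_of_nonneg ENNReal.toReal_nonneg]
    exact (_root_.abs_of_nonneg ENNReal.toReal_nonneg).symm
  exact le_antisymm (csSup_le ⟨_, hmem⟩ hub) (le_csSup ⟨_, hub⟩ hmem)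

/-- A finite positive combination of Dirac measures. -/
def mixM {ι : Type*} [Fintype ι] (p : ι → α) (c : ι → ℝ) : Measure α :=
  ∑ i, ENNReal.ofReal (c i) • MeasureTheory.Measure.dirac (p i)

lemma mixM_apply {ι : Type*} [Fintype ι] (p : ι → α) (c : ι → ℝ) (s : Set α) :
    mixM p c s = ∑ i, ENNReal.ofReal (c i) * MeasureTheory.Measure.dirac (p i) s := by
  rw [mixM, MeasureTheory.Measure.finset_sum_apply]
  simp [MeasureTheory.Measure.smul_apply]

instance mixM_finite {ι : Type*} [Fintype ι] (p : ι → α) (c : ι → ℝ) :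
    IsFiniteMeasure (mixM p c) := by
  constructor
  rw [mixM_apply]
  exact ENNReal.sum_lt_top.2 fun i _ => by
    exact ENNReal.mul_lt_top ENNReal.ofReal_lt_top (by simp [MeasureTheory.Measure.dirac_apply_of_mem (Set.mem_univ _)])

lemma mixM_apply_toReal {ι : Type*} [Fintype ι] (p : ι → α) (c : ι → ℝ)
    (hc : ∀ i, 0 ≤ c i) (s : Set α) :
    (mixM p c s).toReal = ∑ i, c i * (MeasureTheory.Measure.dirac (p i) s).toReal := by
  rw [mixM_apply, ENNReal.toReal_sum fun i _ => ?_]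
  · exact Finset.sum_congr rfl fun i _ => by
      rw [ENNReal.toReal_mul, ENNReal.toReal_ofReal (hc i)]
  · exact ENNReal.mul_ne_top ENNReal.ofReal_lt_top.ne (MeasureTheory.measure_ne_top _ _)

lemma cm_sum_apply {ι : Type*} (s : Finset ι) (μ : ι → ComplexMeasure α) (t : Set α) :
    (∑ i ∈ s, μ i) t = ∑ i ∈ s, μ i t := by
  induction s using Finset.cons_induction with
  | empty => simp
  | cons i s hi ih => rw [Finset.sum_cons, Finset.sum_cons,
      MeasureTheory.VectorMeasure.add_apply, ih]

lemma mixC_eq {ι : Type*} [Fintype ι] (p : ι → α) (c : ι → ℝ) (hc : ∀ i, 0 ≤ c i) :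
    (∑ i, ((c i : ℂ)) • cdirac (p i)) = (mixM p c).toSignedMeasure.toComplexMeasure 0 := by
  refine MeasureTheory.VectorMeasure.ext fun s hs => ?_
  rw [cm_sum_apply, CM_apply _ hs, mixM_apply_toReal p c hc s]
  push_cast
  refine Finset.sum_congr rfl fun i _ => ?_
  rw [Pi.smul_apply, smul_eq_mul,
    show cdirac (p i) s = (((MeasureTheory.Measure.dirac (p i)) s).toReal : ℂ) from
      CM_apply _ hs]

lemma integrable_dirac_my [MeasurableSingletonClass α] (f : α → ℂ) (a : α) :
    Integrable f (MeasureTheory.Measure.dirac a) := by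
  refine (integrable_const (f a)).congr ?_
  rw [Filter.EventuallyEq, MeasureTheory.ae_dirac_eq]
  exact Filter.eventually_pure.2 rfl

lemma integral_mixM [MeasurableSingletonClass α] {ι : Type*} [Fintype ι]
    (p : ι → α) (c : ι → ℝ) (hc : ∀ i, 0 ≤ c i) (f : α → ℂ) :
    ∫ x, f x ∂(mixM p c) = ∑ i, (c i : ℂ) * f (p i) := by
  rw [mixM, MeasureTheory.integral_finset_sum_measure fun i _ =>
    (integrable_dirac_my f (p i)).smul_measure ENNReal.ofReal_lt_top.ne]
  refine Finset.sum_congr rfl fun i _ => ?_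
  rw [MeasureTheory.integral_smul_measure, MeasureTheory.integral_dirac,
    ENNReal.toReal_ofReal (hc i), Complex.real_smul]

end Helpers

/-- If a configuration of `m = 2K+1` particles admits `m` ghost particles
matched one-to-one with the particle positions at every time sample, then the dynamical
recovery problem admits infinitely many solutions; in particular `ω` is not the unique
total-variation minimizer. -/
theorem infinitely_many_solutions_of_ghosts
    {d K : ℕ} (hd : 1 ≤ d) (hK : 1 ≤ K) (τ : ℝ) (hτ : 0 < τ) (f_c : ℕ)
    (P G : Fin (2 * K + 1) → PS d)
    (hPmem : ∀ i, P i ∈ Omega d K τ) (hPdist : Function.Injective P)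
    (hGmem : ∀ j, G j ∈ Omega d K τ) (hGdist : Function.Injective G)
    (hghost : ∀ j, IsGhost (K := K) τ P (Finset.Icc (-(K : ℤ)) (K : ℤ)) (G j))
    (hdisj : Disjoint (Set.range P) (Set.range G))
    (hpos : ∀ k ∈ Finset.Icc (-(K : ℤ)) (K : ℤ), ∀ i i' : Fin (2 * K + 1), i ≠ i' →
      (fun j => (P i).1 j + (k : ℝ) * τ * (P i).2 j) ≠
        (fun j => (P i').1 j + (k : ℝ) * τ * (P i').2 j))
    (huniq : ∀ k ∈ Finset.Icc (-(K : ℤ)) (K : ℤ), ∀ i : Fin (2 * K + 1),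
      ∃! j' : Fin (2 * K + 1), ∀ j,
        (G j').1 j - (P i).1 j + (k : ℝ) * τ * ((G j').2 j - (P i).2 j) = 0)
    (w : Fin (2 * K + 1) → ℝ) (hw : ∀ i, 0 < w i) :
    Set.Infinite {lam : ComplexMeasure (PS d) |
        SupportedOn lam (Omega d K τ) ∧
        (∀ s : Set (PS d), MeasurableSet s → (lam s).im = 0 ∧ 0 ≤ (lam s).re) ∧
        SameMeas K τ f_c lam (∑ i, ((w i : ℂ)) • cdirac (P i)) ∧
        tvNorm lam = tvNorm (∑ i, ((w i : ℂ)) • cdirac (P i))} ∧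
      ∃ lam : ComplexMeasure (PS d),
        lam ≠ (∑ i, ((w i : ℂ)) • cdirac (P i)) ∧
        SupportedOn lam (Omega d K τ) ∧
        SameMeas K τ f_c lam (∑ i, ((w i : ℂ)) • cdirac (P i)) ∧
        tvNorm lam ≤ tvNorm (∑ i, ((w i : ℂ)) • cdirac (P i)) := by
  classical
  have hwle : ∀ i, (0:ℝ) ≤ w i := fun i => (hw i).le
  have hω : (∑ i, ((w i : ℂ)) • cdirac (P i)) =
      (mixM P w).toSignedMeasure.toComplexMeasure 0 := mixC_eq P w hwle
  -- the matching sums at each time sample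
  have hmatch : ∀ k ∈ Finset.Icc (-(K:ℤ)) (K:ℤ), ∀ l : Fin d → ℤ,
      (∑ j, testFn d τ l k (G j)) = ∑ i, testFn d τ l k (P i) := by
    intro k hk l
    set σ : Fin (2*K+1) → Fin (2*K+1) := fun i => (huniq k hk i).choose with hσdef
    have hσ : ∀ i jj, (G (σ i)).1 jj - (P i).1 jj
        + (k:ℝ) * τ * ((G (σ i)).2 jj - (P i).2 jj) = 0 :=
      fun i => (huniq k hk i).choose_spec.1
    have hpt : ∀ i jj, (G (σ i)).1 jj + (k:ℝ) * τ * (G (σ i)).2 jj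
        = (P i).1 jj + (k:ℝ) * τ * (P i).2 jj := by
      intro i jj
      linear_combination hσ i jj
    have hinj : Function.Injective σ := by
      intro i i' h
      by_contra hne
      exact hpos k hk i i' hne (funext fun jj => by rw [← hpt i jj, ← hpt i' jj, h])
    have hbij : Function.Bijective σ := Finite.injective_iff_bijective.1 hinj
    have hfe : ∀ i, testFn d τ l k (G (σ i)) = testFn d τ l k (P i) := by
      intro i
      unfold testFn
      congr 1
      congr 1
      refine Finset.sum_congr rfl fun jj _ => ?_
      congr 1
      have h := hpt i jj
      push_cast
      exact_mod_cast congrArg (fun r : ℝ => (r : ℂ)) h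
    calc (∑ j, testFn d τ l k (G j)) = ∑ i, testFn d τ l k (G (σ i)) :=
          (hbij.sum_comp _).symm
      _ = ∑ i, testFn d τ l k (P i) := Finset.sum_congr rfl fun i _ => hfe i
  have hne : (Finset.univ : Finset (Fin (2*K+1))).Nonempty :=
    ⟨⟨0, Nat.succ_pos _⟩, Finset.mem_univ _⟩
  set i0 : Fin (2*K+1) := ⟨0, Nat.succ_pos _⟩ with hi0
  set ε := Finset.univ.inf' hne w with hεdef
  have hε : 0 < ε := (Finset.lt_inf'_iff _).2 fun i _ => hw i
  have hεle : ∀ i, ε ≤ w i := fun i => Finset.inf'_le _ (Finset.mem_univ i)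
  set q : Fin (2*K+1) ⊕ Fin (2*K+1) → PS d := Sum.elim P G with hqdef
  set cf : ℝ → (Fin (2*K+1) ⊕ Fin (2*K+1) → ℝ) :=
    fun t => Sum.elim (fun i => w i - t) fun _ => t with hcfdef
  set Lam : ℝ → ComplexMeasure (PS d) :=
    fun t => (mixM q (cf t)).toSignedMeasure.toComplexMeasure 0 with hLamdef
  have hcf : ∀ t ∈ Set.Ioc (0:ℝ) ε, ∀ x, 0 ≤ cf t x := by
    rintro t ⟨ht0, htε⟩ (i | j)
    · show (0:ℝ) ≤ w i - t
      exact sub_nonneg.2 (htε.trans (hεle i))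
    · exact ht0.le
  -- value of Lam t on the singleton {G i0}
  have hdiracP : ∀ i, MeasureTheory.Measure.dirac (P i) ({G i0} : Set (PS d)) = 0 := by
    intro i
    rw [MeasureTheory.Measure.dirac_apply' _ (measurableSet_singleton _)]
    refine Set.indicator_of_notMem (fun h => ?_) _
    exact Set.disjoint_left.mp hdisj (Set.mem_range_self i)
      ⟨i0, (Set.mem_singleton_iff.1 h).symm⟩
  have hdiracG : ∀ j, (MeasureTheory.Measure.dirac (G j) ({G i0} : Set (PS d))).toReal
      = if j = i0 then 1 else 0 := by
    intro j
    rw [MeasureTheory.Measure.dirac_apply' _ (measurableSet_singleton _)]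
    by_cases h : j = i0
    · subst h; simp
    · rw [Set.indicator_of_notMem (fun hm => h (hGdist (Set.mem_singleton_iff.1 hm)))]
      simp [h]
  have hval : ∀ t ∈ Set.Ioc (0:ℝ) ε, Lam t {G i0} = (t : ℂ) := by
    intro t ht
    rw [hLamdef]
    rw [CM_apply _ (measurableSet_singleton _),
      mixM_apply_toReal q (cf t) (hcf t ht) _]
    rw [Fintype.sum_sum_type]
    have e1 : ∀ i : Fin (2*K+1), cf t (Sum.inl i) *
        ((MeasureTheory.Measure.dirac (q (Sum.inl i))) ({G i0} : Set (PS d))).toReal = 0 := by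
      intro i
      show (w i - t) * ((MeasureTheory.Measure.dirac (P i)) ({G i0} : Set (PS d))).toReal = 0
      rw [hdiracP i]
      simp
    have e2 : ∀ x : Fin (2*K+1), cf t (Sum.inr x) *
        ((MeasureTheory.Measure.dirac (q (Sum.inr x))) ({G i0} : Set (PS d))).toReal
          = if x = i0 then t else 0 := by
      intro x
      show t * ((MeasureTheory.Measure.dirac (G x)) ({G i0} : Set (PS d))).toReal = _
      rw [hdiracG x]
      split_ifs <;> simp
    rw [Finset.sum_congr rfl fun i _ => e1 i, Finset.sum_congr rfl fun x _ => e2 x,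
      Finset.sum_const_zero, zero_add, Finset.sum_ite_eq' Finset.univ i0 fun _ => t]
    simp
  have hωval : (∑ i, ((w i : ℂ)) • cdirac (P i)) ({G i0} : Set (PS d)) = 0 := by
    rw [hω, CM_apply _ (measurableSet_singleton _), mixM_apply_toReal P w hwle _]
    simp [hdiracP]
  -- membership of Lam t in the solution set
  have hmemS : ∀ t ∈ Set.Ioc (0:ℝ) ε,
      SupportedOn (Lam t) (Omega d K τ) ∧
      (∀ s : Set (PS d), MeasurableSet s → ((Lam t) s).im = 0 ∧ 0 ≤ ((Lam t) s).re) ∧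
      SameMeas K τ f_c (Lam t) (∑ i, ((w i : ℂ)) • cdirac (P i)) ∧
      tvNorm (Lam t) = tvNorm (∑ i, ((w i : ℂ)) • cdirac (P i)) := by
    intro t ht
    refine ⟨?_, ?_, ?_, ?_⟩
    · intro s hs hdis
      rw [hLamdef, CM_apply _ hs]
      have hz : mixM q (cf t) s = 0 := by
        rw [mixM_apply]
        refine Finset.sum_eq_zero fun x _ => ?_
        have hx : q x ∈ Omega d K τ := by
          rcases x with i | j
          · exact hPmem i
          · exact hGmem j
        have hxs : q x ∉ s := fun hmem => (Set.disjoint_left.mp hdis hmem) hx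
        rw [MeasureTheory.Measure.dirac_apply' _ hs, Set.indicator_of_notMem hxs, mul_zero]
      rw [hz]
      simp
    · intro s hs
      rw [hLamdef, CM_apply _ hs]
      exact ⟨by simp, by simp [ENNReal.toReal_nonneg]⟩
    · intro l hl k hk
      have hk' : k ∈ Finset.Icc (-(K:ℤ)) (K:ℤ) := Finset.mem_Icc.2 (abs_le.1 hk)
      rw [hω]
      show cintegral _ _ = cintegral _ _
      rw [cintegral_CM, cintegral_CM, integral_mixM q (cf t) (hcf t ht) _,
        integral_mixM P w hwle _]
      rw [Fintype.sum_sum_type]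
      simp only [hqdef, hcfdef, Sum.elim_inl, Sum.elim_inr]
      have h2 : ∑ j, (t : ℂ) * testFn d τ l k (G j)
          = ∑ i, (t : ℂ) * testFn d τ l k (P i) := by
        rw [← Finset.mul_sum, ← Finset.mul_sum, hmatch k hk' l]
      rw [h2, ← Finset.sum_add_distrib]
      refine Finset.sum_congr rfl fun i _ => ?_
      push_cast
      ring
    · rw [hω, hLamdef, tvNorm_CM, tvNorm_CM,
        mixM_apply_toReal q (cf t) (hcf t ht) _, mixM_apply_toReal P w hwle _]
      simp only [MeasureTheory.Measure.dirac_apply_of_mem (Set.mem_univ _),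
        ENNReal.toReal_one, mul_one]
      rw [Fintype.sum_sum_type]
      simp only [hqdef, hcfdef, Sum.elim_inl, Sum.elim_inr]
      rw [Finset.sum_sub_distrib, Finset.sum_const]
      ring
  constructor
  · have hinj2 : Set.InjOn Lam (Set.Ioc 0 ε) := by
      intro t ht t' ht' h
      have := (hval t ht).symm.trans (h ▸ hval t' ht')
      exact_mod_cast this
    refine (Set.Infinite.image hinj2 (Set.Ioc_infinite hε)).mono ?_
    rintro lam ⟨t, ht, rfl⟩
    exact hmemS t ht
  · refine ⟨Lam ε, ?_, (hmemS ε ⟨hε, le_refl ε⟩).1, (hmemS ε ⟨hε, le_refl ε⟩).2.2.1,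
      le_of_eq (hmemS ε ⟨hε, le_refl ε⟩).2.2.2⟩
    intro h
    have h1 : Lam ε ({G i0} : Set (PS d)) = (∑ i, ((w i : ℂ)) • cdirac (P i)) {G i0} := by
      rw [h]
    rw [hval ε ⟨hε, le_refl ε⟩, hωval] at h1
    exact hε.ne' (by exact_mod_cast h1)

end
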